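/- Let A be a commutative ring with identity with sr(A) = 1. Then every matrix in E_n(A), n ≥ 2, is a product of at most 4 matrices each of which is triangular (upper or lower) with 1's along the diagonal. -/

import Mathlib

open scoped BigOperators

/-- A tuple is unimodular if some combination of its entries equals 1. -/
def Unimodular {A : Type*} [CommRing A] {n : ℕ} (a : Fin n → A) : Prop :=
  ∃ b : Fin n → A, ∑ i, b i * a i = 1

/-- A unimodular `(n+1)`-tuple is reducible if adding multiples of the last entry
to the first `n` entries yields a unimodular `n`-tuple. -/
def Reducible {A : Type*} [CommRing A] {n : ℕ} (a : Fin (n + 1) → A) : Prop :=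
  ∃ c : Fin n → A,
    Unimodular (fun i : Fin n => a i.castSucc + c i * a (Fin.last n))

/-- `srLE A n` : the Bass stable rank of `A` is at most `n`, i.e. every
unimodular `(n+1)`-tuple is reducible. -/
def srLE (A : Type*) [CommRing A] (n : ℕ) : Prop :=
  ∀ a : Fin (n + 1) → A, Unimodular a → Reducible a

/-- The Bass stable rank of `A`, as an extended natural number
(`⊤` if no `n` works). -/
noncomputable def sr (A : Type*) [CommRing A] : ℕ∞ :=
  sInf {c : ℕ∞ | ∃ n : ℕ, c = (n : ℕ∞) ∧ srLE A n}

/-- An elementary matrix: differs from the identity in at most one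
off-diagonal entry. -/
def IsElementary {A : Type*} [CommRing A] {n : ℕ}
    (E : Matrix (Fin n) (Fin n) A) : Prop :=
  ∃ i j : Fin n, ∃ a : A, i ≠ j ∧ E = 1 + Matrix.single i j a

/-- The set of products of elementary matrices; since the inverse of an
elementary matrix is elementary, this is the group `E_n(A)`. -/
def ElemSubgroup (A : Type*) [CommRing A] (n : ℕ) :
    Submonoid (Matrix (Fin n) (Fin n) A) :=
  Submonoid.closure {E | IsElementary E}

/-- Upper triangular with `1` along the diagonal. -/
def UnipUpper {A : Type*} [CommRing A] {n : ℕ}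
    (M : Matrix (Fin n) (Fin n) A) : Prop :=
  (∀ i j : Fin n, j < i → M i j = 0) ∧ ∀ i, M i i = 1

/-- Lower triangular with `1` along the diagonal. -/
def UnipLower {A : Type*} [CommRing A] {n : ℕ}
    (M : Matrix (Fin n) (Fin n) A) : Prop :=
  (∀ i j : Fin n, i < j → M i j = 0) ∧ ∀ i, M i i = 1

/-- Triangular (upper or lower) with `1` along the diagonal. -/
def UnipTriangular {A : Type*} [CommRing A] {n : ℕ}
    (M : Matrix (Fin n) (Fin n) A) : Prop :=
  UnipUpper M ∨ UnipLower M

namespace Stmt17Aux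

open Matrix

variable {A : Type*} [CommRing A] {m : ℕ}

/-! ### Basic facts about `1 + vecMulVec u v` -/

lemma vmv_mul (u v : Fin m → A) (M : Matrix (Fin m) (Fin m) A) :
    vecMulVec u v * M = vecMulVec u (v ᵥ* M) := by
  ext i j
  simp only [Matrix.mul_apply, vecMulVec_apply, Matrix.vecMul, dotProduct]
  rw [Finset.mul_sum]
  exact Finset.sum_congr rfl fun k _ => by ring

lemma mul_vmv (u v : Fin m → A) (M : Matrix (Fin m) (Fin m) A) :
    M * vecMulVec u v = vecMulVec (M *ᵥ u) v := by
  ext i j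
  simp only [Matrix.mul_apply, vecMulVec_apply, Matrix.mulVec, dotProduct]
  rw [Finset.sum_mul]
  exact Finset.sum_congr rfl fun k _ => by ring

lemma one_add_vmv_mul (u v : Fin m → A) (M : Matrix (Fin m) (Fin m) A) :
    (1 + vecMulVec u v) * M = M + vecMulVec u (v ᵥ* M) := by
  rw [add_mul, one_mul, vmv_mul]

lemma mul_one_add_vmv (u v : Fin m → A) (M : Matrix (Fin m) (Fin m) A) :
    M * (1 + vecMulVec u v) = M + vecMulVec (M *ᵥ u) v := by
  rw [mul_add, mul_one, mul_vmv]

lemma vmv_neg (u v : Fin m → A) : vecMulVec u (-v) = -vecMulVec u v := by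
  ext i j; simp [vecMulVec_apply]

lemma G_mul_G_neg (u v : Fin m → A) (h : ∑ k, v k * u k = 0) :
    (1 + vecMulVec u v) * (1 + vecMulVec u (-v)) = 1 := by
  have h2 : vecMulVec u v * vecMulVec u (-v) = 0 := by
    rw [vmv_mul]
    have hz : v ᵥ* vecMulVec u (-v) = 0 := by
      funext j
      simp only [Matrix.vecMul, dotProduct, vecMulVec_apply, Pi.zero_apply]
      have he : ∀ k : Fin m, v k * (u k * (-v) j) = (v k * u k) * (-v) j := fun k => by ring
      rw [Finset.sum_congr rfl fun k _ => he k, ← Finset.sum_mul, h, zero_mul]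
    rw [hz]
    ext i j; simp [vecMulVec_apply]
  rw [mul_add, mul_one, add_mul, one_mul, h2, add_zero, vmv_neg]
  abel

lemma G_neg_mul (u v : Fin m → A) (h : ∑ k, v k * u k = 0) :
    (1 + vecMulVec u (-v)) * (1 + vecMulVec u v) = 1 := by
  have h' : ∑ k, (-v) k * u k = 0 := by
    have he : ∀ k : Fin m, (-v) k * u k = -(v k * u k) := fun k => by
      simp only [Pi.neg_apply]; ring
    rw [Finset.sum_congr rfl fun k _ => he k, Finset.sum_neg_distrib, h, neg_zero]
  have := G_mul_G_neg u (-v) h'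
  simpa [neg_neg] using this

/-! ### Unipotent triangular matrices -/

lemma unipLower_one : UnipLower (1 : Matrix (Fin m) (Fin m) A) :=
  ⟨fun _ _ h => Matrix.one_apply_ne (ne_of_lt h), fun i => Matrix.one_apply_eq i⟩

lemma unipUpper_one : UnipUpper (1 : Matrix (Fin m) (Fin m) A) :=
  ⟨fun _ _ h => Matrix.one_apply_ne (ne_of_gt h), fun i => Matrix.one_apply_eq i⟩

lemma unipLower_G {u v : Fin m → A} (h : ∀ i j : Fin m, i ≤ j → u i * v j = 0) :
    UnipLower (1 + vecMulVec u v) := by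
  constructor
  · intro i j hij
    rw [Matrix.add_apply, vecMulVec_apply, Matrix.one_apply_ne (ne_of_lt hij),
      h i j (le_of_lt hij), add_zero]
  · intro i
    rw [Matrix.add_apply, vecMulVec_apply, Matrix.one_apply_eq, h i i le_rfl, add_zero]

lemma unipUpper_G {u v : Fin m → A} (h : ∀ i j : Fin m, j ≤ i → u i * v j = 0) :
    UnipUpper (1 + vecMulVec u v) := by
  constructor
  · intro i j hij
    rw [Matrix.add_apply, vecMulVec_apply, Matrix.one_apply_ne (ne_of_gt hij),
      h i j (le_of_lt hij), add_zero]
  · intro i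
    rw [Matrix.add_apply, vecMulVec_apply, Matrix.one_apply_eq, h i i le_rfl, add_zero]

lemma UnipLower.mul {M N : Matrix (Fin m) (Fin m) A} (hM : UnipLower M) (hN : UnipLower N) :
    UnipLower (M * N) := by
  constructor
  · intro i j hij
    rw [Matrix.mul_apply]
    apply Finset.sum_eq_zero
    intro k _
    rcases lt_or_ge i k with h | h
    · rw [hM.1 i k h, zero_mul]
    · rw [hN.1 k j (lt_of_le_of_lt h hij), mul_zero]
  · intro i
    rw [Matrix.mul_apply, Finset.sum_eq_single i]
    · rw [hM.2, hN.2, one_mul]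
    · intro k _ hk
      rcases lt_or_ge i k with h | h
      · rw [hM.1 i k h, zero_mul]
      · rw [hN.1 k i (lt_of_le_of_ne h hk), mul_zero]
    · intro h; exact absurd (Finset.mem_univ i) h

lemma UnipUpper.mul {M N : Matrix (Fin m) (Fin m) A} (hM : UnipUpper M) (hN : UnipUpper N) :
    UnipUpper (M * N) := by
  constructor
  · intro i j hij
    rw [Matrix.mul_apply]
    apply Finset.sum_eq_zero
    intro k _
    rcases lt_or_ge k i with h | h
    · rw [hM.1 i k h, zero_mul]
    · rw [hN.1 k j (lt_of_lt_of_le hij h), mul_zero]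
  · intro i
    rw [Matrix.mul_apply, Finset.sum_eq_single i]
    · rw [hM.2, hN.2, one_mul]
    · intro k _ hk
      rcases lt_or_ge k i with h | h
      · rw [hM.1 i k h, zero_mul]
      · rw [hN.1 k i (lt_of_le_of_ne h (Ne.symm hk)), mul_zero]
    · intro h; exact absurd (Finset.mem_univ i) h

lemma UnipUpper.det_eq_one {M : Matrix (Fin m) (Fin m) A} (h : UnipUpper M) : M.det = 1 := by
  rw [Matrix.det_of_upperTriangular (fun i j hij => h.1 i j hij)]
  simp [h.2]

lemma UnipLower.det_eq_one {M : Matrix (Fin m) (Fin m) A} (h : UnipLower M) : M.det = 1 := by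
  rw [Matrix.det_of_lowerTriangular M (fun i j hij => h.1 i j (by simpa using hij))]
  simp [h.2]

/-! ### Inverses of unipotent triangular matrices -/

lemma pow_apply_eq_zero {S : Matrix (Fin m) (Fin m) A}
    (hS : ∀ i j : Fin m, i ≤ j → S i j = 0) :
    ∀ (k : ℕ) (i j : Fin m), (i : ℕ) < (j : ℕ) + k → (S ^ k) i j = 0 := by
  intro k
  induction k with
  | zero =>
    intro i j h
    rw [pow_zero]
    exact Matrix.one_apply_ne (by intro e; subst e; omega)
  | succ k ih =>
    intro i j h
    rw [pow_succ, Matrix.mul_apply]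
    apply Finset.sum_eq_zero
    intro x _
    rcases le_or_gt x j with hx | hx
    · rw [hS x j hx, mul_zero]
    · have hx' : (j : ℕ) < (x : ℕ) := hx
      rw [ih i x (by omega), zero_mul]

lemma UnipLower.exists_inv {M : Matrix (Fin m) (Fin m) A} (h : UnipLower M) :
    ∃ N, UnipLower N ∧ M * N = 1 ∧ N * M = 1 := by
  have hS : ∀ i j : Fin m, i ≤ j → (M - 1) i j = 0 := by
    intro i j hij
    rcases eq_or_lt_of_le hij with rfl | hlt
    · simp [Matrix.sub_apply, h.2, Matrix.one_apply_eq]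
    · simp [Matrix.sub_apply, h.1 i j hlt, Matrix.one_apply_ne (ne_of_lt hlt)]
  have hS' : ∀ i j : Fin m, i ≤ j → (-(M - 1)) i j = 0 := by
    intro i j hij; simp [hS i j hij]
  have hpow : (M - 1) ^ m = 0 := by
    ext i j
    have := pow_apply_eq_zero hS m i j (by have := i.isLt; omega)
    simpa using this
  have hnegpow : (-(M - 1)) ^ m = (0 : Matrix (Fin m) (Fin m) A) := by
    rw [neg_pow, hpow, mul_zero]
  set N : Matrix (Fin m) (Fin m) A := ∑ k ∈ Finset.range m, (-(M - 1)) ^ k with hN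
  have h3 : (-(M - 1) - 1 : Matrix (Fin m) (Fin m) A) = -M := by abel
  have h1 : N * M = 1 := by
    have hgs := geom_sum_mul (-(M - 1)) m
    rw [hnegpow, ← hN, h3] at hgs
    calc N * M = -(N * -M) := by simp
    _ = -(0 - 1) := by rw [hgs]
    _ = 1 := by simp
  have h2 : M * N = 1 := by
    have hgs := mul_geom_sum (-(M - 1)) m
    rw [hnegpow, ← hN, h3] at hgs
    calc M * N = -(-M * N) := by simp
    _ = -(0 - 1) := by rw [hgs]
    _ = 1 := by simp
  refine ⟨N, ⟨?_, ?_⟩, h2, h1⟩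
  · intro i j hij
    rw [hN, Matrix.sum_apply]
    apply Finset.sum_eq_zero
    intro k _
    exact pow_apply_eq_zero hS' k i j (by have : (i : ℕ) < (j : ℕ) := hij; omega)
  · intro i
    have hmem : 0 ∈ Finset.range m := Finset.mem_range.mpr i.pos
    rw [hN, Matrix.sum_apply,
      Finset.sum_eq_single_of_mem 0 hmem
        (fun k _ hk => pow_apply_eq_zero hS' k i i
          (by have : k ≠ 0 := hk; omega))]
    rw [pow_zero, Matrix.one_apply_eq]

lemma UnipUpper.exists_inv {M : Matrix (Fin m) (Fin m) A} (h : UnipUpper M) :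
    ∃ N, UnipUpper N ∧ M * N = 1 ∧ N * M = 1 := by
  have hT : UnipLower Mᵀ := ⟨fun i j hij => h.1 j i hij, h.2⟩
  obtain ⟨N, hNu, hN1, hN2⟩ := UnipLower.exists_inv hT
  refine ⟨Nᵀ, ⟨fun i j hij => hNu.1 j i hij, hNu.2⟩, ?_, ?_⟩
  · have := congrArg Matrix.transpose hN2
    simpa [Matrix.transpose_mul] using this
  · have := congrArg Matrix.transpose hN1
    simpa [Matrix.transpose_mul] using this

/-! ### Embedding into the upper-left block -/

def embed (X : Matrix (Fin m) (Fin m) A) : Matrix (Fin (m + 1)) (Fin (m + 1)) A :=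
  Matrix.of fun i j =>
    if hi : i = Fin.last m then (if j = Fin.last m then 1 else 0)
    else if hj : j = Fin.last m then 0 else X (i.castPred hi) (j.castPred hj)

@[simp] lemma embed_last_last (X : Matrix (Fin m) (Fin m) A) :
    embed X (Fin.last m) (Fin.last m) = 1 := by simp [embed]

@[simp] lemma embed_last_castSucc (X : Matrix (Fin m) (Fin m) A) (j : Fin m) :
    embed X (Fin.last m) j.castSucc = 0 := by
  simp [embed, (Fin.castSucc_lt_last j).ne]

@[simp] lemma embed_castSucc_last (X : Matrix (Fin m) (Fin m) A) (i : Fin m) :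
    embed X i.castSucc (Fin.last m) = 0 := by
  simp [embed, (Fin.castSucc_lt_last i).ne]

@[simp] lemma embed_castSucc_castSucc (X : Matrix (Fin m) (Fin m) A) (i j : Fin m) :
    embed X i.castSucc j.castSucc = X i j := by
  simp [embed, (Fin.castSucc_lt_last i).ne, (Fin.castSucc_lt_last j).ne]

lemma embed_mul (X Y : Matrix (Fin m) (Fin m) A) :
    embed X * embed Y = embed (X * Y) := by
  ext i j
  rw [Matrix.mul_apply, Fin.sum_univ_castSucc]
  induction i using Fin.lastCases with
  | last =>
    induction j using Fin.lastCases with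
    | last => simp
    | cast j => simp
  | cast i =>
    induction j using Fin.lastCases with
    | last => simp
    | cast j => simp [Matrix.mul_apply]

lemma embed_one : embed (1 : Matrix (Fin m) (Fin m) A) = 1 := by
  ext i j
  induction i using Fin.lastCases with
  | last =>
    induction j using Fin.lastCases with
    | last => simp
    | cast j => simp [Matrix.one_apply, (Fin.castSucc_lt_last j).ne']
  | cast i =>
    induction j using Fin.lastCases with
    | last => simp [Matrix.one_apply, (Fin.castSucc_lt_last i).ne]
    | cast j => simp [Matrix.one_apply, Fin.castSucc_inj]

lemma embed_det (X : Matrix (Fin m) (Fin m) A) : (embed X).det = X.det := by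
  rw [Matrix.det_succ_row (embed X) (Fin.last m), Finset.sum_eq_single (Fin.last m)]
  · have hsub : (embed X).submatrix (Fin.last m).succAbove (Fin.last m).succAbove = X := by
      ext i j
      simp [Fin.succAbove_last]
    rw [hsub, embed_last_last, mul_one]
    have hsign : (-1 : A) ^ ((Fin.last m : ℕ) + (Fin.last m : ℕ)) = 1 :=
      Even.neg_one_pow ⟨(Fin.last m : ℕ), rfl⟩
    rw [hsign, one_mul]
  · intro j _ hj
    rcases Fin.eq_castSucc_or_eq_last j with ⟨j', rfl⟩ | rfl
    · rw [embed_last_castSucc]; ring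
    · exact absurd rfl hj
  · intro h; exact absurd (Finset.mem_univ _) h

lemma UnipLower.embed' {X : Matrix (Fin m) (Fin m) A} (h : UnipLower X) :
    UnipLower (embed X) := by
  constructor
  · intro i j hij
    induction i using Fin.lastCases with
    | last => exact absurd hij (Fin.le_last j).not_gt
    | cast i =>
      induction j using Fin.lastCases with
      | last => simp
      | cast j => simpa using h.1 i j (Fin.castSucc_lt_castSucc_iff.mp hij)
  · intro i
    induction i using Fin.lastCases with
    | last => simp
    | cast i => simpa using h.2 i

lemma UnipUpper.embed' {X : Matrix (Fin m) (Fin m) A} (h : UnipUpper X) :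
    UnipUpper (embed X) := by
  constructor
  · intro i j hij
    induction j using Fin.lastCases with
    | last => exact absurd hij (Fin.le_last i).not_gt
    | cast j =>
      induction i using Fin.lastCases with
      | last => simp
      | cast i => simpa using h.1 i j (Fin.castSucc_lt_castSucc_iff.mp hij)
  · intro i
    induction i using Fin.lastCases with
    | last => simp
    | cast i => simpa using h.2 i

lemma single_vecMul_embed (X : Matrix (Fin m) (Fin m) A) :
    Pi.single (Fin.last m) (1 : A) ᵥ* embed X = Pi.single (Fin.last m) 1 := by
  funext j
  rw [Matrix.single_vecMul]
  induction j using Fin.lastCases with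
  | last => simp
  | cast j => simp [Pi.single_eq_of_ne (Fin.castSucc_lt_last j).ne]

lemma embed_mulVec_single (X : Matrix (Fin m) (Fin m) A) :
    embed X *ᵥ Pi.single (Fin.last m) (1 : A) = Pi.single (Fin.last m) 1 := by
  funext i
  rw [Matrix.mulVec_single]
  induction i using Fin.lastCases with
  | last => simp
  | cast i => simp [Pi.single_eq_of_ne (Fin.castSucc_lt_last i).ne]

lemma mulVec_embed_apply_last (X : Matrix (Fin m) (Fin m) A) (x : Fin (m + 1) → A) :
    (embed X *ᵥ x) (Fin.last m) = x (Fin.last m) := by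
  simp only [Matrix.mulVec, dotProduct]
  rw [Fin.sum_univ_castSucc]
  simp

lemma vecMul_embed_apply_last (X : Matrix (Fin m) (Fin m) A) (x : Fin (m + 1) → A) :
    (x ᵥ* embed X) (Fin.last m) = x (Fin.last m) := by
  simp only [Matrix.vecMul, dotProduct]
  rw [Fin.sum_univ_castSucc]
  simp

/-! ### Triangular unipotent matrices supported in the last row/column -/

lemma unipLower_single_last (v : Fin (m + 1) → A) (hv : v (Fin.last m) = 0) :
    UnipLower (1 + vecMulVec (Pi.single (Fin.last m) 1) v) := by
  apply unipLower_G
  intro i j hij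
  by_cases hi : i = Fin.last m
  · subst hi
    have hj : j = Fin.last m := le_antisymm (Fin.le_last j) hij
    rw [hj, hv, mul_zero]
  · rw [Pi.single_eq_of_ne hi, zero_mul]

lemma unipUpper_single_last (u : Fin (m + 1) → A) (hu : u (Fin.last m) = 0) :
    UnipUpper (1 + vecMulVec u (Pi.single (Fin.last m) 1)) := by
  apply unipUpper_G
  intro i j hij
  by_cases hj : j = Fin.last m
  · subst hj
    have hi : i = Fin.last m := le_antisymm (Fin.le_last i) hij
    rw [hi, hu, zero_mul]
  · rw [Pi.single_eq_of_ne hj, mul_zero]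

/-! ### The stable-rank-one step -/

lemma srFact (h1 : srLE A 1) {n : ℕ} (v b : Fin (n + 1) → A)
    (hb : ∑ i, b i * v i = 1) :
    ∃ c : Fin n → A, IsUnit (v (Fin.last n) + ∑ i : Fin n, c i * v i.castSucc) := by
  set s : A := ∑ i : Fin n, b i.castSucc * v i.castSucc with hs
  have hsum : b (Fin.last n) * v (Fin.last n) + s = 1 := by
    rw [Fin.sum_univ_castSucc] at hb
    rw [hs, add_comm]
    exact hb
  set a : Fin 2 → A := ![v (Fin.last n), s] with ha
  have hauni : Unimodular a := by
    refine ⟨![b (Fin.last n), 1], ?_⟩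
    rw [Fin.sum_univ_two]
    simp only [ha, Matrix.cons_val_zero, Matrix.cons_val_one, Matrix.head_cons]
    rw [one_mul]
    exact hsum
  obtain ⟨c1, hc1⟩ := h1 a hauni
  obtain ⟨b1, hb1⟩ := hc1
  rw [Fin.sum_univ_one] at hb1
  refine ⟨fun i => c1 0 * b i.castSucc, ?_⟩
  have key : a ((0 : Fin 1).castSucc) + c1 0 * a (Fin.last 1)
      = v (Fin.last n) + ∑ i : Fin n, (c1 0 * b i.castSucc) * v i.castSucc := by
    have h0 : (0 : Fin 1).castSucc = (0 : Fin 2) := rfl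
    have h1' : Fin.last 1 = (1 : Fin 2) := rfl
    rw [h0, h1']
    simp only [ha, Matrix.cons_val_zero, Matrix.cons_val_one, Matrix.head_cons]
    rw [hs, Finset.mul_sum]
    congr 1
    exact Finset.sum_congr rfl fun i _ => by ring
  rw [← key]
  exact IsUnit.of_mul_eq_one (b1 0) (by rw [mul_comm]; exact hb1)

/-! ### The main decomposition lemma -/

lemma mainLemma (h1 : srLE A 1) :
    ∀ (m : ℕ) (M : Matrix (Fin m) (Fin m) A), M.det = 1 →
      ∃ L₁ U₁ L₂ U₂ : Matrix (Fin m) (Fin m) A,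
        UnipLower L₁ ∧ UnipUpper U₁ ∧ UnipLower L₂ ∧ UnipUpper U₂ ∧
          M = L₁ * U₁ * L₂ * U₂ := by
  intro m
  induction m with
  | zero =>
    intro M _
    refine ⟨1, 1, 1, 1, unipLower_one, unipUpper_one, unipLower_one, unipUpper_one, ?_⟩
    ext i j
    exact i.elim0
  | succ n ih =>
    intro M hdet
    rcases Nat.eq_zero_or_pos n with rfl | hn
    · -- size-one case
      have hM00 : M 0 0 = 1 := by rwa [Matrix.det_fin_one] at hdet
      have hM1 : M = 1 := by
        ext i j
        have hi : i = 0 := Fin.fin_one_eq_zero i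
        have hj : j = 0 := Fin.fin_one_eq_zero j
        subst hi; subst hj
        rw [hM00, Matrix.one_apply_eq]
      refine ⟨1, 1, 1, 1, unipLower_one, unipUpper_one, unipLower_one, unipUpper_one, ?_⟩
      rw [hM1]; simp
    · -- main case: n ≥ 1
      have hlast0 : Fin.last n ≠ 0 := by
        intro h
        have := congrArg Fin.val h
        simp only [Fin.val_last, Fin.val_zero] at this
        omega
      -- column 0 of M is unimodular
      have hcol : ∑ j, (Matrix.adjugate M) 0 j * M j 0 = 1 := by
        have h := Matrix.adjugate_mul M
        have h0 : (Matrix.adjugate M * M) 0 0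
            = (M.det • (1 : Matrix (Fin (n + 1)) (Fin (n + 1)) A)) 0 0 := by rw [h]
        rw [Matrix.mul_apply] at h0
        rw [h0, Matrix.smul_apply, Matrix.one_apply_eq, hdet, smul_eq_mul, mul_one]
      obtain ⟨c, hc⟩ := srFact h1 (fun i => M i 0) (fun j => Matrix.adjugate M 0 j) hcol
      set c' : Fin (n + 1) → A := Fin.snoc c 0 with hc'
      have hc'last : c' (Fin.last n) = 0 := by rw [hc']; simp
      set Λ : Matrix (Fin (n + 1)) (Fin (n + 1)) A
        := 1 + vecMulVec (Pi.single (Fin.last n) 1) c' with hΛ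
      set Λinv : Matrix (Fin (n + 1)) (Fin (n + 1)) A
        := 1 + vecMulVec (Pi.single (Fin.last n) 1) (-c') with hΛinv
      have hΛcond : ∑ k, c' k * (Pi.single (Fin.last n) 1 : Fin (n + 1) → A) k = 0 := by
        rw [show (∑ k, c' k * (Pi.single (Fin.last n) 1 : Fin (n + 1) → A) k)
            = c' ⬝ᵥ Pi.single (Fin.last n) 1 from rfl,
          dotProduct_single, hc'last, zero_mul]
      have hΛinvΛ : Λinv * Λ = 1 := by rw [hΛ, hΛinv]; exact G_neg_mul _ _ hΛcond
      have hΛUnip : UnipLower Λ := by rw [hΛ]; exact unipLower_single_last c' hc'last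
      have hΛinvUnip : UnipLower Λinv := by
        rw [hΛinv]
        exact unipLower_single_last (-c') (by rw [Pi.neg_apply, hc'last, neg_zero])
      set M₁ := Λ * M with hM₁
      have hM₁app : ∀ i j, M₁ i j
          = M i j + (Pi.single (Fin.last n) 1 : Fin (n + 1) → A) i * (c' ᵥ* M) j := by
        intro i j
        rw [hM₁, hΛ, one_add_vmv_mul, Matrix.add_apply, vecMulVec_apply]
      have hM₁l0 : M₁ (Fin.last n) 0 = M (Fin.last n) 0 + ∑ i : Fin n, c i * M i.castSucc 0 := by
        rw [hM₁app, Pi.single_eq_same, one_mul]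
        congr 1
        have hvm : (c' ᵥ* M) 0 = ∑ k, c' k * M k 0 := rfl
        rw [hvm, Fin.sum_univ_castSucc]
        simp [hc']
      have hu : IsUnit (M₁ (Fin.last n) 0) := by rw [hM₁l0]; exact hc
      set u := hu.unit with hudef
      have huspec : (u : A) = M₁ (Fin.last n) 0 := hu.unit_spec
      set r : A := (1 - M₁ (Fin.last n) (Fin.last n)) * ↑u⁻¹ with hr
      set R : Matrix (Fin (n + 1)) (Fin (n + 1)) A
        := 1 + vecMulVec (Pi.single 0 r) (Pi.single (Fin.last n) 1) with hR
      set Rinv : Matrix (Fin (n + 1)) (Fin (n + 1)) A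
        := 1 + vecMulVec (Pi.single 0 r) (-(Pi.single (Fin.last n) 1)) with hRinv
      have hsingle0last : (Pi.single 0 r : Fin (n + 1) → A) (Fin.last n) = 0 := by
        rw [Pi.single_eq_of_ne hlast0]
      have hRcond : ∑ k, (Pi.single (Fin.last n) 1 : Fin (n + 1) → A) k
          * (Pi.single 0 r : Fin (n + 1) → A) k = 0 := by
        rw [show (∑ k, (Pi.single (Fin.last n) 1 : Fin (n + 1) → A) k
              * (Pi.single 0 r : Fin (n + 1) → A) k)
            = (Pi.single (Fin.last n) 1 : Fin (n + 1) → A) ⬝ᵥ Pi.single 0 r from rfl,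
          single_dotProduct, hsingle0last, mul_zero]
      have hRRinv : R * Rinv = 1 := by rw [hR, hRinv]; exact G_mul_G_neg _ _ hRcond
      have hRUnip : UnipUpper R := by
        rw [hR]; exact unipUpper_single_last _ hsingle0last
      have hRinv' : Rinv = 1 + vecMulVec (Pi.single (0 : Fin (n + 1)) (-r))
          (Pi.single (Fin.last n) 1) := by
        rw [hRinv]
        congr 1
        ext i j
        simp only [vecMulVec_apply, Pi.neg_apply, Pi.single_apply]
        split_ifs <;> ring
      have hRinvUnip : UnipUpper Rinv := by
        rw [hRinv']
        exact unipUpper_single_last _ (by rw [Pi.single_eq_of_ne hlast0])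
      set M₂ := M₁ * R with hM₂
      have hM₂app : ∀ i j, M₂ i j
          = M₁ i j + (M₁ i 0 * r) * (Pi.single (Fin.last n) 1 : Fin (n + 1) → A) j := by
        intro i j
        rw [hM₂, hR, mul_one_add_vmv]
        simp [Matrix.add_apply, vecMulVec_apply, Matrix.mulVec_single]
        ring
      have hM₂ll : M₂ (Fin.last n) (Fin.last n) = 1 := by
        rw [hM₂app, Pi.single_eq_same, mul_one, ← huspec, hr]
        have hcalc : (u : A) * ((1 - M₁ (Fin.last n) (Fin.last n)) * ↑u⁻¹)
            = 1 - M₁ (Fin.last n) (Fin.last n) := by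
          rw [mul_comm, mul_assoc, Units.inv_mul, mul_one]
        rw [hcalc]
        ring
      -- clear the last column
      set w : Fin (n + 1) → A := fun i => if i = Fin.last n then 0 else M₂ i (Fin.last n)
        with hw
      have hwl : w (Fin.last n) = 0 := by rw [hw]; simp
      set U₀ : Matrix (Fin (n + 1)) (Fin (n + 1)) A
        := 1 + vecMulVec w (Pi.single (Fin.last n) 1) with hU₀
      set U₀inv : Matrix (Fin (n + 1)) (Fin (n + 1)) A
        := 1 + vecMulVec w (-(Pi.single (Fin.last n) 1)) with hU₀inv
      have hU₀cond : ∑ k, (Pi.single (Fin.last n) 1 : Fin (n + 1) → A) k * w k = 0 := by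
        rw [show (∑ k, (Pi.single (Fin.last n) 1 : Fin (n + 1) → A) k * w k)
            = (Pi.single (Fin.last n) 1 : Fin (n + 1) → A) ⬝ᵥ w from rfl,
          single_dotProduct, hwl, mul_zero]
      have hU₀U₀inv : U₀ * U₀inv = 1 := by rw [hU₀, hU₀inv]; exact G_mul_G_neg _ _ hU₀cond
      have hU₀Unip : UnipUpper U₀ := by rw [hU₀]; exact unipUpper_single_last w hwl
      have hU₀inv' : U₀inv = 1 + vecMulVec (-w) (Pi.single (Fin.last n) 1) := by
        rw [hU₀inv]
        congr 1
        ext i j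
        simp only [vecMulVec_apply, Pi.neg_apply]
        ring
      have hU₀invUnip : UnipUpper U₀inv := by
        rw [hU₀inv']
        exact unipUpper_single_last (-w) (by rw [Pi.neg_apply, hwl, neg_zero])
      set M₃ := U₀inv * M₂ with hM₃
      have hM₃app : ∀ i j, M₃ i j = M₂ i j - w i * M₂ (Fin.last n) j := by
        intro i j
        rw [hM₃, hU₀inv, one_add_vmv_mul, Matrix.add_apply, vecMulVec_apply]
        have hv : ((-(Pi.single (Fin.last n) (1 : A))) ᵥ* M₂) j
            = -(M₂ (Fin.last n) j) := by
          simp [Matrix.neg_vecMul, Matrix.single_vecMul]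
        rw [hv]
        ring
      have hM₃col : ∀ i, M₃ i (Fin.last n) = if i = Fin.last n then 1 else 0 := by
        intro i
        rw [hM₃app i (Fin.last n), hM₂ll, mul_one]
        by_cases hi : i = Fin.last n
        · subst hi
          rw [if_pos rfl, hM₂ll, hwl, sub_zero]
        · rw [if_neg hi]
          have hwi : w i = M₂ i (Fin.last n) := by rw [hw]; simp [hi]
          rw [hwi, sub_self]
      have hM₃row : ∀ j, M₃ (Fin.last n) j = M₂ (Fin.last n) j := by
        intro j
        rw [hM₃app, hwl, zero_mul, sub_zero]
      set t : Fin (n + 1) → A := fun j => if j = Fin.last n then 0 else M₃ (Fin.last n) j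
        with ht
      have htl : t (Fin.last n) = 0 := by rw [ht]; simp
      set L₀ : Matrix (Fin (n + 1)) (Fin (n + 1)) A
        := 1 + vecMulVec (Pi.single (Fin.last n) 1) t with hL₀
      set L₀inv : Matrix (Fin (n + 1)) (Fin (n + 1)) A
        := 1 + vecMulVec (Pi.single (Fin.last n) 1) (-t) with hL₀inv
      have hL₀cond : ∑ k, t k * (Pi.single (Fin.last n) 1 : Fin (n + 1) → A) k = 0 := by
        rw [show (∑ k, t k * (Pi.single (Fin.last n) 1 : Fin (n + 1) → A) k)
            = t ⬝ᵥ Pi.single (Fin.last n) 1 from rfl,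
          dotProduct_single, htl, zero_mul]
      have hL₀invL₀ : L₀inv * L₀ = 1 := by rw [hL₀, hL₀inv]; exact G_neg_mul _ _ hL₀cond
      have hL₀Unip : UnipLower L₀ := by rw [hL₀]; exact unipLower_single_last t htl
      have hL₀invUnip : UnipLower L₀inv := by
        rw [hL₀inv]
        exact unipLower_single_last (-t) (by rw [Pi.neg_apply, htl, neg_zero])
      set M₄ := M₃ * L₀inv with hM₄
      have hM₄app : ∀ i j, M₄ i j = M₃ i j - M₃ i (Fin.last n) * t j := by
        intro i j
        rw [hM₄, hL₀inv, mul_one_add_vmv, Matrix.add_apply, vecMulVec_apply]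
        have hv : (M₃ *ᵥ Pi.single (Fin.last n) (1 : A)) i = M₃ i (Fin.last n) := by
          simp [Matrix.mulVec_single]
        rw [hv, Pi.neg_apply]
        ring
      have hM₄col : ∀ i, M₄ i (Fin.last n) = if i = Fin.last n then 1 else 0 := by
        intro i
        rw [hM₄app, htl, mul_zero, sub_zero]
        exact hM₃col i
      have hM₄row : ∀ j, M₄ (Fin.last n) j = if j = Fin.last n then 1 else 0 := by
        intro j
        rw [hM₄app]
        have h3 : M₃ (Fin.last n) (Fin.last n) = 1 := by rw [hM₃col]; simp
        rw [h3, one_mul, hM₃row]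
        by_cases hj : j = Fin.last n
        · subst hj
          rw [if_pos rfl, htl, sub_zero, hM₂ll]
        · rw [if_neg hj]
          have htj : t j = M₃ (Fin.last n) j := by rw [ht]; simp [hj]
          rw [htj, hM₃row, sub_self]
      set N : Matrix (Fin n) (Fin n) A
        := Matrix.of fun i j : Fin n => M₄ i.castSucc j.castSucc with hNdef
      have hembedN : M₄ = embed N := by
        ext i j
        induction i using Fin.lastCases with
        | last =>
          induction j using Fin.lastCases with
          | last => rw [hM₄row, if_pos rfl, embed_last_last]
          | cast j => rw [hM₄row, if_neg (Fin.castSucc_lt_last j).ne, embed_last_castSucc]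
        | cast i =>
          induction j using Fin.lastCases with
          | last => rw [hM₄col, if_neg (Fin.castSucc_lt_last i).ne, embed_castSucc_last]
          | cast j => rw [embed_castSucc_castSucc, hNdef]; rfl
      have hdetM₄ : M₄.det = 1 := by
        rw [hM₄, hM₃, hM₂, hM₁]
        simp [Matrix.det_mul, hdet, UnipLower.det_eq_one hΛUnip,
          UnipUpper.det_eq_one hRUnip, UnipUpper.det_eq_one hU₀invUnip,
          UnipLower.det_eq_one hL₀invUnip]
      have hdetN : N.det = 1 := by
        have hed := embed_det N
        rw [← hembedN] at hed
        rw [← hed]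
        exact hdetM₄
      obtain ⟨L₁', U₁', L₂', U₂', hL₁', hU₁', hL₂', hU₂', hfac⟩ := ih N hdetN
      obtain ⟨K', hK'unip, hK'1, hK'2⟩ := UnipLower.exists_inv hL₁'
      obtain ⟨Q', hQ'unip, hQ'1, hQ'2⟩ := UnipUpper.exists_inv hU₂'
      have hKembed : embed L₁' * embed K' = 1 := by rw [embed_mul, hK'1, embed_one]
      have hQembed : embed Q' * embed U₂' = 1 := by rw [embed_mul, hQ'2, embed_one]
      set Ut : Matrix (Fin (n + 1)) (Fin (n + 1)) A
        := 1 + vecMulVec (embed K' *ᵥ w) (Pi.single (Fin.last n) 1) with hUt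
      set Lt : Matrix (Fin (n + 1)) (Fin (n + 1)) A
        := 1 + vecMulVec (Pi.single (Fin.last n) 1) (t ᵥ* embed Q') with hLt
      have hUtUnip : UnipUpper Ut := by
        rw [hUt]
        exact unipUpper_single_last _ (by rw [mulVec_embed_apply_last, hwl])
      have hLtUnip : UnipLower Lt := by
        rw [hLt]
        exact unipLower_single_last _ (by rw [vecMul_embed_apply_last, htl])
      have comm1 : U₀ * embed L₁' = embed L₁' * Ut := by
        rw [hU₀, hUt, one_add_vmv_mul, mul_one_add_vmv, single_vecMul_embed,
          Matrix.mulVec_mulVec, hKembed, Matrix.one_mulVec]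
      have comm2 : embed U₂' * L₀ = Lt * embed U₂' := by
        rw [hL₀, hLt, mul_one_add_vmv, one_add_vmv_mul, embed_mulVec_single,
          Matrix.vecMul_vecMul, hQembed, Matrix.vecMul_one]
      have hfac5 : Λ * M * R = U₀ * embed N * L₀ := by
        rw [← hembedN, hM₄, hM₃, hM₂, hM₁]
        simp only [← mul_assoc]
        rw [hU₀U₀inv, one_mul, mul_assoc (Λ * M * R) L₀inv L₀, hL₀invL₀, mul_one]
      have hMexpr : M = Λinv * (U₀ * embed N * L₀) * Rinv := by
        have h' : Λinv * (Λ * M * R) * Rinv = M := by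
          simp only [← mul_assoc]
          rw [hΛinvΛ, one_mul, mul_assoc M R Rinv, hRRinv, mul_one]
        rw [hfac5] at h'
        exact h'.symm
      have hembed4 : embed N = embed L₁' * embed U₁' * embed L₂' * embed U₂' := by
        simp only [embed_mul]
        rw [hfac]
      refine ⟨Λinv * embed L₁', Ut * embed U₁', embed L₂' * Lt, embed U₂' * Rinv,
        ?_, ?_, ?_, ?_, ?_⟩
      · exact UnipLower.mul hΛinvUnip (UnipLower.embed' hL₁')
      · exact UnipUpper.mul hUtUnip (UnipUpper.embed' hU₁')
      · exact UnipLower.mul (UnipLower.embed' hL₂') hLtUnip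
      · exact UnipUpper.mul (UnipUpper.embed' hU₂') hRinvUnip
      · rw [hMexpr, hembed4]
        calc Λinv * (U₀ * (embed L₁' * embed U₁' * embed L₂' * embed U₂') * L₀) * Rinv
            = Λinv * ((U₀ * embed L₁') * embed U₁' * embed L₂' * (embed U₂' * L₀)) * Rinv := by
              simp only [mul_assoc]
          _ = Λinv * ((embed L₁' * Ut) * embed U₁' * embed L₂' * (Lt * embed U₂')) * Rinv := by
              rw [comm1, comm2]
          _ = Λinv * embed L₁' * (Ut * embed U₁') * (embed L₂' * Lt) * (embed U₂' * Rinv) := by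
              simp only [mul_assoc]

/-! ### Determinant of elements of `E_n(A)` -/

lemma det_eq_one_of_mem {n : ℕ} {M : Matrix (Fin n) (Fin n) A}
    (hM : M ∈ ElemSubgroup A n) : M.det = 1 := by
  induction hM using Submonoid.closure_induction with
  | mem x hx =>
    obtain ⟨i, j, a, hij, rfl⟩ := hx
    have happly : ∀ p q : Fin n,
        Matrix.single i j a p q = if i = p ∧ j = q then a else 0 := fun _ _ => rfl
    rcases hij.lt_or_gt with h | h
    · have hup : UnipUpper (1 + Matrix.single i j a) := by
        constructor
        · intro p q hpq
          rw [Matrix.add_apply, Matrix.one_apply_ne (ne_of_gt hpq), happly, if_neg, add_zero]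
          rintro ⟨rfl, rfl⟩
          exact absurd h (lt_asymm hpq)
        · intro p
          rw [Matrix.add_apply, Matrix.one_apply_eq, happly, if_neg, add_zero]
          rintro ⟨h1, h2⟩
          exact hij (h1.trans h2.symm)
      exact UnipUpper.det_eq_one hup
    · have hlo : UnipLower (1 + Matrix.single i j a) := by
        constructor
        · intro p q hpq
          rw [Matrix.add_apply, Matrix.one_apply_ne (ne_of_lt hpq), happly, if_neg, add_zero]
          rintro ⟨rfl, rfl⟩
          exact absurd h (lt_asymm hpq)
        · intro p
          rw [Matrix.add_apply, Matrix.one_apply_eq, happly, if_neg, add_zero]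
          rintro ⟨h1, h2⟩
          exact hij (h1.trans h2.symm)
      exact UnipLower.det_eq_one hlo
  | one => exact Matrix.det_one
  | mul x y hx hy hdx hdy => rw [Matrix.det_mul, hdx, hdy, one_mul]

/-! ### Extracting `srLE A 1` from `sr A = 1` -/

lemma srLE_one (hsr : sr A = 1) : srLE A 1 := by
  have hS : {c : ℕ∞ | ∃ n : ℕ, c = (n : ℕ∞) ∧ srLE A n}.Nonempty := by
    by_contra h
    rw [Set.not_nonempty_iff_eq_empty] at h
    rw [sr, h, sInf_empty] at hsr
    simp at hsr
  have hT : {k : ℕ | srLE A k}.Nonempty := by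
    obtain ⟨x, k, hk1, hk2⟩ := hS
    exact ⟨k, hk2⟩
  have hmem : srLE A (sInf {k : ℕ | srLE A k}) := Nat.sInf_mem hT
  have heq : sr A = ((sInf {k : ℕ | srLE A k} : ℕ) : ℕ∞) := by
    apply le_antisymm
    · exact sInf_le ⟨_, rfl, hmem⟩
    · apply le_sInf
      rintro c ⟨k, rfl, hk⟩
      exact_mod_cast Nat.sInf_le hk
  rw [hsr] at heq
  have hone : sInf {k : ℕ | srLE A k} = 1 := by exact_mod_cast heq.symm
  rwa [hone] at hmem

end Stmt17Aux

/-- If `sr(A) = 1`, every matrix in `E_n(A)` (`n ≥ 2`) is a product of at most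
four triangular unipotent matrices. -/
theorem stmt17 {A : Type*} [CommRing A] (hsr : sr A = 1) (n : ℕ)
    (hn : 2 ≤ n) (M : Matrix (Fin n) (Fin n) A) (hM : M ∈ ElemSubgroup A n) :
    ∃ T₁ T₂ T₃ T₄ : Matrix (Fin n) (Fin n) A,
      UnipTriangular T₁ ∧ UnipTriangular T₂ ∧ UnipTriangular T₃ ∧
        UnipTriangular T₄ ∧ M = T₁ * T₂ * T₃ * T₄ := by
  have h1 : srLE A 1 := Stmt17Aux.srLE_one hsr
  have hdet : M.det = 1 := Stmt17Aux.det_eq_one_of_mem hM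
  obtain ⟨L₁, U₁, L₂, U₂, hL₁, hU₁, hL₂, hU₂, hprod⟩ := Stmt17Aux.mainLemma h1 n M hdet
  exact ⟨L₁, U₁, L₂, U₂, Or.inr hL₁, Or.inl hU₁, Or.inr hL₂, Or.inl hU₂, hprod⟩
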